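/- For every integer d ≥ 1 and integers a₁, …, a_d, let V_d be the 2d×2d matrix built from the 2×2 diagonal blocks with rows (−1,−1),(0,a₁) for the first block and (0,−1),(0,a_k) for blocks k = 2,…,d, with a single entry 1 placed at positions (2k, 2k+1) and (2k+1, 2k) linking consecutive blocks. Then det(V_d − t·V_dᵀ) = t^d · ∇(z) where z² = (t−1)²/t and ∇(z) = 1 − a₁z² + a₂z⁴ − ⋯ + (−1)^d a_d z^{2d}. -/

import Mathlib

open Polynomial Matrix

/-- The Tsutsumi–Yamada Seifert matrix `V_d` (0-indexed): `V[0,0] = V[0,1] = −1`;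
for `k = 1,…,d`, `V[2k−1,2k−1] = a k`; for `k = 1,…,d−1`, `V[2k−1,2k] = 1`,
`V[2k,2k−1] = 1` and `V[2k,2k+1] = −1`; all other entries vanish. -/
def TYMatrix (d : ℕ) (a : ℕ → ℤ) : Matrix (Fin (2 * d)) (Fin (2 * d)) ℤ :=
  Matrix.of fun i j =>
    if i = j then
      (if i.val = 0 then -1 else if i.val % 2 = 1 then a ((i.val + 1) / 2) else 0)
    else if j.val = i.val + 1 then (if i.val % 2 = 0 then -1 else 1)
    else if i.val = j.val + 1 ∧ j.val % 2 = 1 then 1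
    else 0

variable {R : Type*} [CommRing R]


def tri (b c e : ℕ → R) (n : ℕ) : Matrix (Fin n) (Fin n) R :=
  Matrix.of fun i j =>
    if (i : ℕ) = j then b i
    else if (j : ℕ) = (i : ℕ) + 1 then c i
    else if (i : ℕ) = (j : ℕ) + 1 then e j
    else 0

lemma tri_sub (b c e : ℕ → R) (n : ℕ) :
    (tri b c e (n + 1)).submatrix Fin.castSucc Fin.castSucc = tri b c e n := by
  ext i j
  simp [tri, Matrix.submatrix_apply]

lemma det_tri_rec (b c e : ℕ → R) (n : ℕ) :
    (tri b c e (n + 2)).det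
      = b (n + 1) * (tri b c e (n + 1)).det - c n * e n * (tri b c e n).det := by
  rw [Matrix.det_succ_row (tri b c e (n + 2)) (Fin.last (n + 1))]
  rw [Fin.sum_univ_castSucc, Fin.sum_univ_castSucc]
  have hz : ∀ j : Fin n, (tri b c e (n + 2)) (Fin.last (n + 1)) j.castSucc.castSucc = 0 := by
    intro j
    have hj := j.isLt
    have hv : ((j.castSucc.castSucc : Fin (n+2)) : ℕ) = (j : ℕ) := rfl
    simp only [tri, Matrix.of_apply, Fin.val_last, hv]
    split_ifs with h1 h2 h3
    · omega
    · omega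
    · omega
    · rfl
  rw [Finset.sum_eq_zero (fun j _ => by rw [hz j]; ring), zero_add]
  -- the j = last term
  have hlastlast : (tri b c e (n + 2)) (Fin.last (n + 1)) (Fin.last (n + 1)) = b (n + 1) := by
    simp [tri]
  have hsub_last : (tri b c e (n + 2)).submatrix (Fin.last (n + 1)).succAbove
      (Fin.last (n + 1)).succAbove = tri b c e (n + 1) := by
    rw [Fin.succAbove_last, tri_sub]
  -- the j = castSucc last term
  have hmid : (tri b c e (n + 2)) (Fin.last (n + 1)) ((Fin.last n).castSucc)
      = e n := by
    have hv : (((Fin.last n).castSucc : Fin (n+2)) : ℕ) = n := rfl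
    simp only [tri, Matrix.of_apply, Fin.val_last, hv]
    split_ifs with h1 h2 <;> first | omega | rfl
  set B := (tri b c e (n + 2)).submatrix (Fin.last (n + 1)).succAbove
      ((Fin.last n).castSucc : Fin (n+2)).succAbove with hB
  have hdetB : B.det = c n * (tri b c e n).det := by
    rw [Matrix.det_succ_column B (Fin.last n), Fin.sum_univ_castSucc]
    have hz2 : ∀ i : Fin n, B i.castSucc (Fin.last n) = 0 := by
      intro i
      have hi := i.isLt
      have hr : (((Fin.last (n+1)).succAbove i.castSucc : Fin (n+2)) : ℕ) = (i : ℕ) := by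
        rw [Fin.succAbove_last]; rfl
      have hc : ((((Fin.last n).castSucc : Fin (n+2)).succAbove (Fin.last n)
          : Fin (n+2)) : ℕ) = n + 1 := by
        simp [Fin.succAbove, Fin.lt_def]
      simp only [hB, Matrix.submatrix_apply, tri, Matrix.of_apply, hr, hc]
      split_ifs with h1 h2 h3
      · omega
      · omega
      · omega
      · rfl
    rw [Finset.sum_eq_zero (fun i _ => by rw [hz2 i]; ring), zero_add]
    have hent : B (Fin.last n) (Fin.last n) = c n := by
      have hr : (((Fin.last (n+1)).succAbove (Fin.last n)) : ℕ) = n := by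
        rw [Fin.succAbove_last]; simp
      have hc : ((((Fin.last n).castSucc : Fin (n+2)).succAbove (Fin.last n)
          : Fin (n+2)) : ℕ) = n + 1 := by
        simp [Fin.succAbove, Fin.lt_def]
      simp only [hB, Matrix.submatrix_apply, tri, Matrix.of_apply, hr, hc]
      split_ifs with h1 h2 <;> first | omega | rfl
    have hsub2 : B.submatrix (Fin.last n).succAbove (Fin.last n).succAbove = tri b c e n := by
      rw [Fin.succAbove_last]
      ext i j
      have hi := i.isLt
      have hj := j.isLt
      have hr : (((Fin.last (n+1)).succAbove i.castSucc : Fin (n+2)) : ℕ) = (i : ℕ) := by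
        rw [Fin.succAbove_last]; rfl
      have hc : ((((Fin.last n).castSucc : Fin (n+2)).succAbove j.castSucc
          : Fin (n+2)) : ℕ) = (j : ℕ) := by
        simp [Fin.succAbove, Fin.lt_def, hj]
      simp only [hB, Matrix.submatrix_apply, tri, Matrix.of_apply, hr, hc]
    rw [hent, hsub2]
    simp [Fin.val_last]
  rw [hlastlast, hsub_last, hmid, hdetB]
  have hsq : (-1 : R) ^ (n * 2) = 1 := by rw [mul_comm, pow_mul]; norm_num
  simp [Fin.val_last, Fin.coe_castSucc, pow_add]
  ring_nf
  rw [hsq]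
  ring

noncomputable def bbP (a : ℕ → ℤ) : ℕ → Polynomial ℤ := fun i =>
  if i = 0 then X - 1 else if i % 2 = 1 then C (a ((i + 1) / 2)) * (1 - X) else 0

noncomputable def ccP : ℕ → Polynomial ℤ := fun i => if i % 2 = 0 then -1 else 1 - X

noncomputable def eeP : ℕ → Polynomial ℤ := fun i => if i % 2 = 0 then X else 1 - X

lemma det_tri_zero (b c e : ℕ → Polynomial ℤ) : (tri b c e 0).det = 1 :=
  Matrix.det_fin_zero

lemma det_tri_one (b c e : ℕ → Polynomial ℤ) : (tri b c e 1).det = b 0 := by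
  rw [Matrix.det_fin_one]
  simp [tri]

lemma key (a : ℕ → ℤ) (ha : a 0 = 1) (k : ℕ) :
    (tri (bbP a) ccP eeP (2 * k + 1)).det = (-1) ^ k * (X - 1) ^ (2 * k + 1) ∧
    (tri (bbP a) ccP eeP (2 * k + 2)).det
      = ∑ i ∈ Finset.range (k + 1 + 1),
          (-1) ^ i * C (a i) * (X - 1) ^ (2 * i) * X ^ (k + 1 - i) := by
  induction k with
  | zero =>
    constructor
    · show (tri (bbP a) ccP eeP 1).det = _
      rw [det_tri_one]
      simp [bbP]
    · show (tri (bbP a) ccP eeP 2).det = _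
      rw [show (2 : ℕ) = 0 + 2 from rfl, det_tri_rec, det_tri_one, det_tri_zero]
      simp [bbP, ccP, eeP, Finset.sum_range_succ, ha]
      ring
  | succ k ih =>
    obtain ⟨ih1, ih2⟩ := ih
    have hodd : (tri (bbP a) ccP eeP (2 * (k + 1) + 1)).det
        = (-1) ^ (k + 1) * (X - 1) ^ (2 * (k + 1) + 1) := by
      rw [show 2 * (k + 1) + 1 = (2 * k + 1) + 2 by ring, det_tri_rec,
        show (2 * k + 1) + 1 = 2 * k + 2 by ring, ih2, ih1]
      have hb : bbP a (2 * k + 1 + 1) = 0 := by simp [bbP, Nat.mul_mod_right]; omega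
      have hc : ccP (2 * k + 1) = 1 - X := by simp [ccP]
      have he : eeP (2 * k + 1) = 1 - X := by simp [eeP]
      rw [hb, hc, he]
      ring
    refine ⟨hodd, ?_⟩
    rw [show 2 * (k + 1) + 2 = (2 * k + 2) + 2 by ring, det_tri_rec,
      show (2 * k + 2) + 1 = 2 * (k + 1) + 1 by ring, hodd, ih2]
    have hb : bbP a (2 * (k + 1) + 1) = C (a (k + 2)) * (1 - X) := by
      have h1 : (2 * (k + 1) + 1) % 2 = 1 := by omega
      have h2 : (2 * (k + 1) + 1 + 1) / 2 = k + 2 := by omega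
      simp [bbP, h1, h2]
    have hc : ccP (2 * k + 2) = -1 := by simp [ccP]
    have he : eeP (2 * k + 2) = X := by simp [eeP]
    rw [hb, hc, he]
    rw [Finset.sum_range_succ (n := k + 1 + 1)]
    simp only [Nat.sub_self, pow_zero, mul_one]
    have hsum : ∑ i ∈ Finset.range (k + 1 + 1),
        (-1 : Polynomial ℤ) ^ i * C (a i) * (X - 1) ^ (2 * i) * X ^ (k + 1 + 1 - i)
        = X * ∑ i ∈ Finset.range (k + 1 + 1),
            (-1) ^ i * C (a i) * (X - 1) ^ (2 * i) * X ^ (k + 1 - i) := by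
      rw [Finset.mul_sum]
      refine Finset.sum_congr rfl fun i hi => ?_
      have hi' : i ≤ k + 1 := by
        have := Finset.mem_range.mp hi; omega
      have : k + 1 + 1 - i = (k + 1 - i) + 1 := by omega
      rw [this, pow_succ]
      ring
    rw [hsum]
    ring

lemma M_eq (d : ℕ) (a : ℕ → ℤ) :
    (TYMatrix d a).map C - (X : Polynomial ℤ) • ((TYMatrix d a)ᵀ.map C)
      = tri (bbP a) ccP eeP (2 * d) := by
  refine Matrix.ext fun i j => ?_
  simp only [Matrix.sub_apply, Matrix.map_apply, Matrix.smul_apply, Matrix.transpose_apply,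
    smul_eq_mul, TYMatrix, Matrix.of_apply, tri, bbP, ccP, eeP, Fin.ext_iff]
  split_ifs
  all_goals try (exfalso; omega)
  all_goals try (push_cast [map_neg, _root_.map_one, map_zero]; ring)
  all_goals
    (rename_i hij _ _ _ _ _
     rw [hij]
     push_cast [map_neg, _root_.map_one, map_zero]
     ring)

/-- `det(V_d − t·V_dᵀ) = Σ_{i=0}^d (−1)^i a_i (t−1)^{2i} t^{d−i}` in `ℤ[t]`,
with `a₀ = 1`; equivalently `t^{−d} det(V_d − tV_dᵀ)` is the Conway polynomial
`1 − a₁z² + a₂z⁴ − ⋯ + (−1)^d a_d z^{2d}` under `z² = (t−1)²/t`. -/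
theorem stmt_7 (d : ℕ) (hd : 1 ≤ d) (a : ℕ → ℤ) (ha : a 0 = 1) :
    Matrix.det ((TYMatrix d a).map Polynomial.C
        - (Polynomial.X : Polynomial ℤ) • ((TYMatrix d a)ᵀ.map Polynomial.C))
      = ∑ i ∈ Finset.range (d + 1),
          (-1) ^ i * Polynomial.C (a i) * (Polynomial.X - 1) ^ (2 * i)
            * Polynomial.X ^ (d - i) := by
  obtain ⟨k, rfl⟩ : ∃ k, d = k + 1 := ⟨d - 1, by omega⟩
  rw [M_eq, show 2 * (k + 1) = 2 * k + 2 by ring]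
  exact (key a ha k).2
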